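/- Let R be a unique factorization domain and A ∈ Mat_{m×m}(R) a square matrix with det(A) ≠ 0. Then Ann.Coker(A) is a principal ideal. -/

import Mathlib

/-- `Ann.Coker(A) = Ann(R^m / A(R^m))`. -/
noncomputable def annCoker {R : Type*} [CommRing R] {m n : ℕ}
    (A : Matrix (Fin m) (Fin n) R) : Ideal R :=
  Module.annihilator R ((Fin m → R) ⧸ LinearMap.range A.mulVecLin)

lemma mem_annCoker_iff {R : Type*} [CommRing R] [IsDomain R]
    {m : ℕ} (A : Matrix (Fin m) (Fin m) R) (hdet : A.det ≠ 0) (r : R) :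
    r ∈ annCoker A ↔ ∀ i j, A.det ∣ r * A.adjugate i j := by
  rw [annCoker, Module.mem_annihilator]
  constructor
  · intro h i j
    have h0 := h (Submodule.Quotient.mk ((Pi.single j 1 : Fin m → R)))
    rw [← Submodule.Quotient.mk_smul, Submodule.Quotient.mk_eq_zero,
      LinearMap.mem_range] at h0
    obtain ⟨w, hw⟩ := h0
    have : A.adjugate.mulVec (A.mulVec w) = A.adjugate.mulVec (r • (Pi.single j 1 : Fin m → R)) := by
      rw [Matrix.mulVecLin_apply] at hw; rw [hw]
    rw [Matrix.mulVec_mulVec, Matrix.adjugate_mul, Matrix.mulVec_smul,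
      Matrix.mulVec_single] at this
    have := congrFun this i
    simp [Matrix.smul_mulVec, Matrix.one_mulVec] at this
    exact ⟨w i, by rw [← this]⟩
  · intro h x
    obtain ⟨v, rfl⟩ := Submodule.Quotient.mk_surjective _ x
    rw [← Submodule.Quotient.mk_smul, Submodule.Quotient.mk_eq_zero]
    have key : ∀ j : Fin m, (Pi.single j (1:R)) ∈
        (LinearMap.range A.mulVecLin).comap (LinearMap.lsmul R (Fin m → R) r) := by
      intro j
      choose c hc using h
      refine ⟨fun i => c i j, ?_⟩
      simp only [Matrix.mulVecLin_apply, LinearMap.lsmul_apply]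
      have hinj : Function.Injective (fun v : Fin m → R => A.det • v) := by
        intro a b hab
        funext i
        have := congrFun hab i
        simpa using mul_left_cancel₀ hdet this
      apply hinj
      show A.det • A.mulVec _ = A.det • r • (Pi.single j 1 : Fin m → R)
      rw [← Matrix.mulVec_smul]
      have hdw : A.det • (fun i => c i j) = r • A.adjugate.mulVec (Pi.single j 1 : Fin m → R) := by
        funext i
        simp [Matrix.mulVec_single, ← hc i j, mul_comm]
      rw [hdw, Matrix.mulVec_smul, Matrix.mulVec_mulVec, Matrix.mul_adjugate,
        Matrix.smul_mulVec, Matrix.one_mulVec, smul_comm]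
    have hv : v ∈ (LinearMap.range A.mulVecLin).comap
        (LinearMap.lsmul R (Fin m → R) r) := by
      rw [show v = ∑ j, Pi.single j (v j) from (Finset.univ_sum_single v).symm]
      refine Submodule.sum_mem _ fun j _ => ?_
      have hsj : (Pi.single j (v j) : Fin m → R) = v j • (Pi.single j 1 : Fin m → R) := by
        rw [← Pi.single_smul, smul_eq_mul, mul_one]
      rw [hsj]
      exact Submodule.smul_mem _ _ (key j)
    exact hv

/-- Over a UFD, for a square matrix `A` with `det(A) ≠ 0`,
the ideal `Ann.Coker(A)` is principal. -/
theorem stmt_10 {R : Type*} [CommRing R] [IsDomain R] [UniqueFactorizationMonoid R]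
    {m : ℕ} (A : Matrix (Fin m) (Fin m) R) (hdet : A.det ≠ 0) :
    (annCoker A).IsPrincipal := by
  classical
  letI := UniqueFactorizationMonoid.normalizationMonoid (α := R)
  letI := UniqueFactorizationMonoid.toStrongNormalizedGCDMonoid R
  set a := A.det with ha
  set G : R := (Finset.univ : Finset (Fin m × Fin m)).gcd (fun p => A.adjugate p.1 p.2) with hG
  set d : R := gcd a G with hd
  have hda : d ∣ a := gcd_dvd_left a G
  have hdG : d ∣ G := gcd_dvd_right a G
  obtain ⟨g, hg⟩ := hda
  have hdne : d ≠ 0 := fun h => hdet (by rw [hg, h, zero_mul])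
  refine ⟨g, ?_⟩
  ext r
  rw [Ideal.submodule_span_eq, Ideal.mem_span_singleton, mem_annCoker_iff A hdet]
  constructor
  · intro h
    -- a ∣ r * G
    have h1 : a ∣ (Finset.univ : Finset (Fin m × Fin m)).gcd (fun p => r * A.adjugate p.1 p.2) :=
      Finset.dvd_gcd fun p _ => h p.1 p.2
    rw [Finset.gcd_mul_left (f := fun p : Fin m × Fin m => A.adjugate p.1 p.2)] at h1
    have h2 : a ∣ r * G := by
      refine h1.trans ?_
      exact mul_dvd_mul_right (normalize_dvd_iff.mpr dvd_rfl) G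
    -- d * g ∣ r * d, cancel d
    -- a ∣ gcd (r*a) (r*G) = normalize r * d
    have h3 : a ∣ gcd (r * a) (r * G) := dvd_gcd ⟨r, mul_comm r a⟩ h2
    rw [gcd_mul_left] at h3
    have h4 : a ∣ r * d := h3.trans (mul_dvd_mul_right (normalize_dvd_iff.mpr dvd_rfl) d)
    obtain ⟨u, hu⟩ := h4
    -- d * g ∣ r * d  : r * d = d * g * u
    refine ⟨u, mul_left_cancel₀ hdne ?_⟩
    calc d * r = r * d := mul_comm _ _
    _ = a * u := hu
    _ = d * (g * u) := by rw [hg]; ring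
  · rintro ⟨s, rfl⟩ i j
    obtain ⟨t, ht⟩ := (hdG.trans (Finset.gcd_dvd (Finset.mem_univ (i, j)) :
      G ∣ A.adjugate i j))
    have hg' : A.det = d * g := hg
    exact ⟨s * t, by rw [ht, hg']; ring⟩
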